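/- For α ∈ (0,1)∪(1,∞) and a distribution p on a finite set X, the maximum over distributions r on X of the pseudospherical expected gain E^p[g_{α,PS}(X,r)] equals (α/(α−1)) (Σ_x p(x)^α)^{1/α}, i.e., the same maximal value as for the α-score. -/

import Mathlib

open BigOperators

/-- `p` is a probability distribution on the finite set `X`. -/
def IsDist {X : Type*} [Fintype X] (p : X → ℝ) : Prop :=
  (∀ x, 0 ≤ p x) ∧ ∑ x, p x = 1

/-- The maximal expected pseudospherical gain
`E^p[g_{α,PS}(X,r)]` with `g_{α,PS}(x,r) = (α/(α-1)) (r(x)/‖r‖_α)^{α-1}`,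
over distributions `r` (with full support when `α < 1`), equals
`(α/(α-1)) (Σ_x p(x)^α)^{1/α}` — the same maximal value as for the α-score. -/
theorem max_expected_pseudospherical {X : Type*} [Fintype X] [Nonempty X]
    (α : ℝ) (hα0 : 0 < α) (hα1 : α ≠ 1)
    (p : X → ℝ) (hp : IsDist p) (hps : α < 1 → ∀ x, 0 < p x) :
    IsGreatest {v : ℝ | ∃ r : X → ℝ, IsDist r ∧ (α < 1 → ∀ x, 0 < r x) ∧
        v = ∑ x, p x * (α / (α - 1) * (r x / (∑ x', r x' ^ α) ^ (1 / α)) ^ (α - 1))}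
      (α / (α - 1) * (∑ x, p x ^ α) ^ (1 / α)) := by
  obtain ⟨hp0, hp1⟩ := hp
  have hα : α ≠ 0 := ne_of_gt hα0
  have hα1' : α - 1 ≠ 0 := sub_ne_zero.2 hα1
  set c := α / (α - 1) with hc
  set S := ∑ x, p x ^ α with hS
  -- S > 0
  have hSpos : 0 < S := by
    obtain ⟨x, hx⟩ : ∃ x, 0 < p x := by
      by_contra h
      push_neg at h
      have h0 : ∑ x, p x = 0 :=
        Finset.sum_eq_zero fun x _ => le_antisymm (h x) (hp0 x)
      rw [h0] at hp1; norm_num at hp1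
    exact Finset.sum_pos' (fun y _ => Real.rpow_nonneg (hp0 y) α)
      ⟨x, Finset.mem_univ x, Real.rpow_pos_of_pos hx α⟩
  -- key rewriting of the expected gain
  have key : ∀ r : X → ℝ, (∀ x, 0 ≤ r x) →
      ∑ x, p x * (c * (r x / (∑ x', r x' ^ α) ^ (1 / α)) ^ (α - 1))
        = c * ((∑ x, p x * r x ^ (α - 1)) / (∑ x', r x' ^ α) ^ ((α - 1) / α)) := by
    intro r hr
    set N := ∑ x', r x' ^ α with hN
    have hN0 : 0 ≤ N := Finset.sum_nonneg fun x _ => Real.rpow_nonneg (hr x) α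
    have hpow : ∀ x, (r x / N ^ (1 / α)) ^ (α - 1)
        = r x ^ (α - 1) / N ^ ((α - 1) / α) := by
      intro x
      rw [Real.div_rpow (hr x) (Real.rpow_nonneg hN0 _), ← Real.rpow_mul hN0]
      congr 2
      field_simp
    calc ∑ x, p x * (c * (r x / N ^ (1 / α)) ^ (α - 1))
        = ∑ x, c * (p x * r x ^ (α - 1)) / N ^ ((α - 1) / α) := by
          refine Finset.sum_congr rfl fun x _ => ?_
          rw [hpow x]; ring
      _ = c * ((∑ x, p x * r x ^ (α - 1)) / N ^ ((α - 1) / α)) := by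
          simp_rw [mul_div_assoc]
          rw [← Finset.mul_sum]
          congr 1
          rw [Finset.sum_div]
          exact Finset.sum_congr rfl fun x _ => (mul_div_assoc _ _ _).symm
  -- p x * p x ^ (α - 1) = p x ^ α
  have hpp : ∀ x : X, p x * p x ^ (α - 1) = p x ^ α := by
    intro x
    calc p x * p x ^ (α - 1) = p x ^ (1 : ℝ) * p x ^ (α - 1) := by rw [Real.rpow_one]
      _ = p x ^ ((1 : ℝ) + (α - 1)) :=
          (Real.rpow_add' (hp0 x) (by norm_num; exact hα)).symm
      _ = p x ^ α := by norm_num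
  have hSdiv : S / S ^ ((α - 1) / α) = S ^ (1 / α) := by
    calc S / S ^ ((α - 1) / α) = S ^ (1 : ℝ) / S ^ ((α - 1) / α) := by rw [Real.rpow_one]
      _ = S ^ ((1 : ℝ) - (α - 1) / α) := (Real.rpow_sub hSpos _ _).symm
      _ = S ^ (1 / α) := by congr 1; field_simp; ring
  constructor
  · -- membership: take r = p
    refine ⟨p, ⟨hp0, hp1⟩, hps, ?_⟩
    rw [key p hp0]
    congr 1
    rw [Finset.sum_congr rfl fun x _ => hpp x, ← hS, hSdiv]
  · -- upper bound
    rintro v ⟨r, ⟨hr0, hr1⟩, hrpos, rfl⟩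
    rw [key r hr0]
    set N := ∑ x', r x' ^ α with hN
    have hNpos : 0 < N := by
      obtain ⟨x, hx⟩ : ∃ x, 0 < r x := by
        by_contra h
        push_neg at h
        have h0 : ∑ x, r x = 0 :=
          Finset.sum_eq_zero fun x _ => le_antisymm (h x) (hr0 x)
        rw [h0] at hr1; norm_num at hr1
      exact Finset.sum_pos' (fun y _ => Real.rpow_nonneg (hr0 y) α)
        ⟨x, Finset.mem_univ x, Real.rpow_pos_of_pos hx α⟩
    set T := ∑ x, p x * r x ^ (α - 1) with hT
    set D := N ^ ((α - 1) / α) with hD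
    have hDpos : 0 < D := Real.rpow_pos_of_pos hNpos _
    have hT0 : 0 ≤ T :=
      Finset.sum_nonneg fun x _ => mul_nonneg (hp0 x) (Real.rpow_nonneg (hr0 x) _)
    rcases hα1.lt_or_gt with hlt | hgt
    · -- α < 1 : reverse direction, c ≤ 0
      have hc0 : c ≤ 0 := div_nonpos_of_nonneg_of_nonpos hα0.le (by linarith)
      have hrp : ∀ x, 0 < r x := hrpos hlt
      have hppos : ∀ x, 0 < p x := hps hlt
      -- Hölder with exponents 1/α and 1/(1-α)
      have hconj : Real.HolderConjugate (1 / α) (1 / (1 - α)) := by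
        rw [Real.holderConjugate_iff]
        constructor
        · rw [lt_div_iff₀ hα0]; linarith
        · rw [one_div, inv_inv, one_div, inv_inv]; ring
      have holder := Real.inner_le_Lp_mul_Lq Finset.univ
        (fun x => (p x * r x ^ (α - 1)) ^ α)
        (fun x => (r x ^ α) ^ (1 - α)) hconj
      have hfg : ∀ x : X, (p x * r x ^ (α - 1)) ^ α * (r x ^ α) ^ (1 - α) = p x ^ α := by
        intro x
        rw [Real.mul_rpow (hp0 x) (Real.rpow_nonneg (hr0 x) _),
          ← Real.rpow_mul (hr0 x), ← Real.rpow_mul (hr0 x), mul_assoc,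
          ← Real.rpow_add (hrp x)]
        have : (α - 1) * α + α * (1 - α) = 0 := by ring
        rw [this, Real.rpow_zero, mul_one]
      have hf : ∀ x : X, |(p x * r x ^ (α - 1)) ^ α| ^ (1 / α) = p x * r x ^ (α - 1) := by
        intro x
        rw [abs_of_nonneg (Real.rpow_nonneg
          (mul_nonneg (hp0 x) (Real.rpow_nonneg (hr0 x) _)) _),
          ← Real.rpow_mul (mul_nonneg (hp0 x) (Real.rpow_nonneg (hr0 x) _)),
          mul_one_div_cancel hα, Real.rpow_one]
      have hg : ∀ x : X, |(r x ^ α) ^ (1 - α)| ^ (1 / (1 - α)) = r x ^ α := by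
        intro x
        rw [abs_of_nonneg (Real.rpow_nonneg (Real.rpow_nonneg (hr0 x) _) _),
          ← Real.rpow_mul (Real.rpow_nonneg (hr0 x) _),
          mul_one_div_cancel (by linarith : (1 : ℝ) - α ≠ 0), Real.rpow_one]
      simp only [hfg, hf, hg, one_div_one_div] at holder
      -- holder : S ≤ T ^ α * N ^ (1 - α)
      have hST : S ^ (1 / α) ≤ T / D := by
        have h1 : S ^ (1 / α) ≤ (T ^ α * N ^ (1 - α)) ^ (1 / α) :=
          Real.rpow_le_rpow hSpos.le holder (by positivity)
        have h2 : (T ^ α * N ^ (1 - α)) ^ (1 / α) = T * N ^ ((1 - α) / α) := by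
          rw [Real.mul_rpow (Real.rpow_nonneg hT0 _) (Real.rpow_nonneg hNpos.le _),
            ← Real.rpow_mul hT0, ← Real.rpow_mul hNpos.le,
            mul_one_div_cancel hα, Real.rpow_one, mul_one_div]
        have h3 : T * N ^ ((1 - α) / α) * D = T := by
          rw [hD, mul_assoc, ← Real.rpow_add hNpos,
            show (1 - α) / α + (α - 1) / α = (0 : ℝ) by ring, Real.rpow_zero, mul_one]
        rw [le_div_iff₀ hDpos]
        calc S ^ (1 / α) * D ≤ T * N ^ ((1 - α) / α) * D :=
              mul_le_mul_of_nonneg_right (h2 ▸ h1) hDpos.le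
          _ = T := h3
      exact mul_le_mul_of_nonpos_left hST hc0
    · -- 1 < α : standard Hölder, c ≥ 0
      have hc0 : 0 ≤ c := div_nonneg hα0.le (by linarith)
      have hconj : Real.HolderConjugate α (α / (α - 1)) := by
        rw [Real.holderConjugate_iff]
        constructor
        · exact hgt
        · rw [inv_div]; field_simp; ring
      have holder := Real.inner_le_Lp_mul_Lq Finset.univ p
        (fun x => r x ^ (α - 1)) hconj
      have hf : ∀ x : X, |p x| ^ α = p x ^ α := fun x => by rw [abs_of_nonneg (hp0 x)]
      have hg : ∀ x : X, |r x ^ (α - 1)| ^ (α / (α - 1)) = r x ^ α := by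
        intro x
        rw [abs_of_nonneg (Real.rpow_nonneg (hr0 x) _), ← Real.rpow_mul (hr0 x)]
        congr 1
        field_simp
      have hq : 1 / (α / (α - 1)) = (α - 1) / α := one_div_div _ _
      simp only [hf, hg, hq] at holder
      -- holder : T ≤ S ^ (1/α) * N ^ ((α-1)/α)
      have hST : T / D ≤ S ^ (1 / α) := by
        rw [div_le_iff₀ hDpos]
        exact holder
      exact mul_le_mul_of_nonneg_left hST hc0
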